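/- Let R be a 3-row graph with s columns and R_C eulerian, and let f be the vertex 3-coloring with f(v_{ij}) = i. Then f extends to an amiable coloring of R if and only if R has a parity-coloring. -/

import Mathlib

/-! A 3-row graph with `s` columns is a simple graph on `Fin 3 × Fin s`
(vertex `(i, j)` lies in row `i` and column `j`) whose columns are independent. -/

/-- Every column is an independent set. -/
def ColIndep {s : ℕ} (R : SimpleGraph (Fin 3 × Fin s)) : Prop :=
  ∀ i i' j, ¬ R.Adj (i, j) (i', j)

/-- `d_c(v, R)`: the number of edges of color `c` (under the edge coloring `g`)
incident with `v`. -/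
noncomputable def dColor {s : ℕ} (R : SimpleGraph (Fin 3 × Fin s))
    (g : Sym2 (Fin 3 × Fin s) → Fin 3) (c : Fin 3) (v : Fin 3 × Fin s) : ℕ :=
  {w | R.Adj v w ∧ g s(v, w) = c}.ncard

/-- An amiable coloring of a 3-row graph: a vertex 3-coloring `f` and an edge
3-coloring `g` such that (i) `f` is injective on every column, (ii) no edge has
the color of one of its endpoints, (iii) for every color `c` and column `j`,
`d_c(v₀ⱼ) + d_c(v₁ⱼ) + d_c(v₂ⱼ)` is even. -/
def Amiable {s : ℕ} (R : SimpleGraph (Fin 3 × Fin s))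
    (f : Fin 3 × Fin s → Fin 3) (g : Sym2 (Fin 3 × Fin s) → Fin 3) : Prop :=
  (∀ j, Function.Injective (fun i : Fin 3 => f (i, j))) ∧
  (∀ v w, R.Adj v w → f v ≠ g s(v, w)) ∧
  (∀ c : Fin 3, ∀ j,
    Even (dColor R g c (0, j) + dColor R g c (1, j) + dColor R g c (2, j)))

/-- `R_C` (the multigraph obtained by identifying each column to one vertex) is
eulerian: the degree of each column, i.e. the sum of the degrees of its three
vertices (columns being independent), is even. -/
def EulerianRC {s : ℕ} (R : SimpleGraph (Fin 3 × Fin s)) : Prop :=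
  ∀ j, Even ((R.neighborSet (0, j)).ncard + (R.neighborSet (1, j)).ncard +
    (R.neighborSet (2, j)).ncard)

/-- The `i`-th row. -/
def rowSet (s : ℕ) (i : Fin 3) : Set (Fin 3 × Fin s) := {v | v.1 = i}

/-- `d(v, R[V_a ∪ V_b])`: the degree of `v` in the subgraph induced by rows `a`, `b`. -/
noncomputable def dRows {s : ℕ} (R : SimpleGraph (Fin 3 × Fin s)) (a b : Fin 3)
    (v : Fin 3 × Fin s) : ℕ :=
  {w | R.Adj v w ∧ (w.1 = a ∨ w.1 = b)}.ncard

/-- `|N(v) ∩ V_a|`: the number of neighbours of `v` in row `a`. -/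
noncomputable def nRow {s : ℕ} (R : SimpleGraph (Fin 3 × Fin s)) (a : Fin 3)
    (v : Fin 3 × Fin s) : ℕ :=
  {w | R.Adj v w ∧ w.1 = a}.ncard

/-- A symmetric parity-coloring: a black/white coloring `φ` (`true` = black) with
(i) `φ(v₀ⱼ) = φ(v₁ⱼ)` iff `d(v₀ⱼ, R[V₁ ∪ V₂]) ≡ |N(v₁ⱼ) ∩ V₁| (mod 2)`,
(ii) `φ(v₁ⱼ) = φ(v₂ⱼ)` iff `d(v₁ⱼ, R[V₂ ∪ V₃]) ≡ |N(v₂ⱼ) ∩ V₂| (mod 2)`,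
(iii) every component of every row has an even number of black vertices.
(Here rows are indexed `0,1,2` instead of the paper's `1,2,3`.) -/
def SymParity {s : ℕ} (R : SimpleGraph (Fin 3 × Fin s))
    (φ : Fin 3 × Fin s → Bool) : Prop :=
  (∀ j, (φ (0, j) = φ (1, j)) ↔ Even (dRows R 0 1 (0, j) + nRow R 0 (1, j))) ∧
  (∀ j, (φ (1, j) = φ (2, j)) ↔ Even (dRows R 1 2 (1, j) + nRow R 1 (2, j))) ∧
  (∀ i : Fin 3, ∀ K : (R.induce (rowSet s i)).ConnectedComponent,
    Even ({u : rowSet s i | u ∈ K.supp ∧ φ u.val = true}.ncard))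

/-- A parity-coloring: like a symmetric parity-coloring, except that condition
(ii) compares the parities of `d(v₁ⱼ, R[V₂ ∪ V₃])` and `d(v₂ⱼ, R[V₂ ∪ V₃])`. -/
def ParityColoring {s : ℕ} (R : SimpleGraph (Fin 3 × Fin s))
    (φ : Fin 3 × Fin s → Bool) : Prop :=
  (∀ j, (φ (0, j) = φ (1, j)) ↔ Even (dRows R 0 1 (0, j) + nRow R 0 (1, j))) ∧
  (∀ j, (φ (1, j) = φ (2, j)) ↔ Even (dRows R 1 2 (1, j) + dRows R 1 2 (2, j))) ∧
  (∀ i : Fin 3, ∀ K : (R.induce (rowSet s i)).ConnectedComponent,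
    Even ({u : rowSet s i | u ∈ K.supp ∧ φ u.val = true}.ncard))


open Finset

variable {α : Type*} [DecidableEq α]

lemma my_filter_symmDiff (A B : Finset α) (p : α → Prop) [DecidablePred p] :
    (symmDiff A B).filter p = symmDiff (A.filter p) (B.filter p) := by
  ext x; simp [Finset.mem_symmDiff, Finset.mem_filter]; tauto

lemma my_card_symmDiff (A B : Finset α) :
    (symmDiff A B).card + 2 * (A ∩ B).card = A.card + B.card := by
  classical
  have h1 : symmDiff A B ∪ (A ∩ B) = A ∪ B := by
    ext x; simp [Finset.mem_symmDiff]; tauto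
  have h2 : Disjoint (symmDiff A B) (A ∩ B) := by
    rw [Finset.disjoint_left]; intro x hx hx'
    simp [Finset.mem_symmDiff] at hx hx'; tauto
  have := Finset.card_union_of_disjoint h2
  rw [h1] at this
  have h3 := Finset.card_union_add_card_inter A B
  omega

lemma my_even_symmDiff_card (A B : Finset α) :
    Even (symmDiff A B).card ↔ (Even A.card ↔ Even B.card) := by
  have key := my_card_symmDiff A B
  simp only [Nat.even_iff]
  omega

lemma my_count_odds_mod (s : Finset α) (f : α → ℕ) :
    (s.filter (fun v => Odd (f v))).card % 2 = (∑ v ∈ s, f v) % 2 := by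
  classical
  induction s using Finset.induction with
  | empty => simp
  | @insert a s' hx ih =>
    rw [Finset.sum_insert hx, Finset.filter_insert]
    by_cases ha : Odd (f a)
    · rw [if_pos ha, Finset.card_insert_of_notMem (by simp [hx])]
      rw [Nat.odd_iff] at ha; omega
    · rw [if_neg ha]
      rw [Nat.odd_iff] at ha; omega


open SimpleGraph
open scoped Classical

lemma my_tjoin {V : Type*} [Fintype V] [DecidableEq V] (G : SimpleGraph V) :
    ∀ T : Finset V, (∀ K : G.ConnectedComponent, Even ((T.filter (· ∈ K.supp)).card)) →
    ∃ S : Finset (Sym2 V), ↑S ⊆ G.edgeSet ∧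
      ∀ x, (x ∈ T ↔ Odd ((S.filter (x ∈ ·)).card)) := by
  intro T
  induction T using Finset.strongInduction with
  | _ T ih =>
  intro hT
  by_cases hTe : T = ∅
  · exact ⟨∅, by simp, by simp [hTe]⟩
  obtain ⟨u, hu⟩ := Finset.nonempty_iff_ne_empty.2 hTe
  set K := G.connectedComponentMk u with hK
  have huK : u ∈ T.filter (· ∈ K.supp) := by
    simp [hu, ConnectedComponent.mem_supp_iff, hK]
  have h2 : 1 < (T.filter (· ∈ K.supp)).card := by
    rcases hT K with ⟨k, hk⟩
    have hpos : 0 < (T.filter (· ∈ K.supp)).card := Finset.card_pos.2 ⟨u, huK⟩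
    omega
  obtain ⟨v, hv, hvu⟩ := Finset.exists_mem_ne h2 u
  simp only [Finset.mem_filter, ConnectedComponent.mem_supp_iff] at hv
  have hreach : G.Reachable u v := by
    have h3 : G.connectedComponentMk v = G.connectedComponentMk u := hv.2.trans hK
    exact (ConnectedComponent.eq.mp h3).symm
  obtain ⟨w⟩ := hreach
  set p := w.toPath with hp
  have ht : p.1.IsTrail := p.2.isTrail
  set P : Finset (Sym2 V) := ht.edgesFinset with hPdef
  have hPsub : ↑P ⊆ G.edgeSet := by
    intro e he
    simp only [hPdef, Walk.IsTrail.edgesFinset, Finset.coe_sort_coe, Finset.mem_coe,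
      Finset.mem_mk, Multiset.mem_coe] at he
    exact p.1.edges_subset_edgeSet he
  have hPdeg : ∀ x, (Odd ((P.filter (x ∈ ·)).card) ↔ (x = u ∨ x = v)) := by
    intro x
    have h1 := ht.even_countP_edges_iff x
    have h2 : (P.filter (x ∈ ·)).card = p.1.edges.countP (fun e => x ∈ e) := by
      simp [hPdef, Walk.IsTrail.edgesFinset, Finset.filter, Finset.card,
        List.countP_eq_length_filter]
    rw [h2, ← Nat.not_even_iff_odd, h1]
    push_neg
    constructor
    · rintro ⟨-, h⟩
      by_cases hx : x = u
      · exact Or.inl hx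
      · exact Or.inr (h hx)
    · rintro (rfl | rfl)
      · exact ⟨hvu.symm, fun h => absurd rfl h⟩
      · exact ⟨hvu.symm, fun _ => rfl⟩
  set T' : Finset V := (T.erase u).erase v with hT'
  have hsub : T' ⊆ T := ((T.erase u).erase_subset v).trans (T.erase_subset u)
  have hss : T' ⊂ T := by
    rw [Finset.ssubset_iff_of_subset hsub]
    exact ⟨u, hu, fun h => (Finset.mem_erase.mp ((Finset.mem_erase.mp h).2)).1 rfl⟩
  have hcond : ∀ K' : G.ConnectedComponent, Even ((T'.filter (· ∈ K'.supp)).card) := by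
    intro K'
    have heq : T'.filter (· ∈ K'.supp) = ((T.filter (· ∈ K'.supp)).erase u).erase v := by
      ext x
      simp only [hT', Finset.mem_erase, Finset.mem_filter]
      tauto
    by_cases hKK : K' = K
    · subst hKK
      have hvmem : v ∈ (T.filter (· ∈ K.supp)).erase u :=
        Finset.mem_erase.mpr ⟨hvu, Finset.mem_filter.mpr ⟨hv.1, by
          rw [ConnectedComponent.mem_supp_iff]; exact hv.2⟩⟩
      rw [heq, Finset.card_erase_of_mem hvmem,
        Finset.card_erase_of_mem huK]
      rcases hT K with ⟨k, hk⟩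
      have h5 : 1 < (T.filter (· ∈ K.supp)).card := h2
      exact ⟨k - 1, by omega⟩
    · have hu' : u ∉ T.filter (· ∈ K'.supp) := by
        intro h
        rw [Finset.mem_filter, ConnectedComponent.mem_supp_iff] at h
        exact hKK (hK.trans h.2).symm
      have hv' : v ∉ (T.filter (· ∈ K'.supp)).erase u := by
        intro h
        have h3 := Finset.mem_filter.mp (Finset.mem_erase.mp h).2
        rw [ConnectedComponent.mem_supp_iff] at h3
        exact hKK (h3.2.symm.trans hv.2)
      rw [heq, Finset.erase_eq_of_notMem hv', Finset.erase_eq_of_notMem hu']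
      exact hT K'
  obtain ⟨S', hS'sub, hS'⟩ := ih T' hss hcond
  refine ⟨symmDiff S' P, ?_, ?_⟩
  · intro e he
    rcases Finset.mem_symmDiff.mp he with ⟨h1, -⟩ | ⟨h1, -⟩
    · exact hS'sub h1
    · exact hPsub h1
  · intro x
    have hsd : ((symmDiff S' P).filter (x ∈ ·)).card % 2
        = ((S'.filter (x ∈ ·)).card + (P.filter (x ∈ ·)).card) % 2 := by
      rw [my_filter_symmDiff]
      have := my_card_symmDiff (S'.filter (x ∈ ·)) (P.filter (x ∈ ·))
      omega
    have h1 := hS' x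
    have h2 := hPdeg x
    have hxT' : x ∈ T' ↔ (x ∈ T ∧ x ≠ u ∧ x ≠ v) := by
      simp only [hT', Finset.mem_erase]; tauto
    have hu2 := hu
    have hv2 := hv.1
    rw [Nat.odd_iff] at h1 h2
    rw [Nat.odd_iff, hsd]
    by_cases hxu : x = u
    · subst hxu
      have ha : ¬ (S'.filter (x ∈ ·)).card % 2 = 1 :=
        fun h => (hxT'.mp (h1.mpr h)).2.1 rfl
      have hb : (P.filter (x ∈ ·)).card % 2 = 1 := h2.mpr (Or.inl rfl)
      simp only [hu2, true_iff]
      omega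
    by_cases hxv : x = v
    · subst hxv
      have ha : ¬ (S'.filter (x ∈ ·)).card % 2 = 1 :=
        fun h => (hxT'.mp (h1.mpr h)).2.2 rfl
      have hb : (P.filter (x ∈ ·)).card % 2 = 1 := h2.mpr (Or.inr rfl)
      simp only [hv2, true_iff]
      omega
    · have hb : ¬ (P.filter (x ∈ ·)).card % 2 = 1 := by
        intro h
        rcases h2.mp h with h' | h'
        exacts [hxu h', hxv h']
      have ha : x ∈ T ↔ (S'.filter (x ∈ ·)).card % 2 = 1 := by
        rw [← h1, hxT']; tauto
      rw [ha]
      omega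

lemma my_deg_edge {V : Type*} [Fintype V] [DecidableEq V] (R : SimpleGraph V)
    (P : Sym2 V → Prop) (hP : ∀ e, P e → e ∈ R.edgeSet) (v : V) :
    {w | R.Adj v w ∧ P s(v, w)}.ncard = {e : Sym2 V | P e ∧ v ∈ e}.ncard := by
  have hinj : Function.Injective (fun w => s(v, w)) := fun a b h =>
    Sym2.congr_right.mp h
  have himg : (fun w => s(v, w)) '' {w | R.Adj v w ∧ P s(v, w)}
      = {e : Sym2 V | P e ∧ v ∈ e} := by
    ext e
    simp only [Set.mem_image, Set.mem_setOf_eq]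
    constructor
    · rintro ⟨w, ⟨hadj, hPe⟩, rfl⟩
      exact ⟨hPe, Sym2.mem_mk_left v w⟩
    · rintro ⟨hPe, hve⟩
      have he := hP e hPe
      induction e with
      | _ x y =>
        rw [SimpleGraph.mem_edgeSet] at he
        rcases Sym2.mem_iff.mp hve with rfl | rfl
        · exact ⟨y, ⟨he, hPe⟩, rfl⟩
        · exact ⟨x, ⟨he.symm, by rwa [Sym2.eq_swap]⟩, Sym2.eq_swap⟩
  calc {w | R.Adj v w ∧ P s(v, w)}.ncard
      = ((fun w => s(v, w)) '' {w | R.Adj v w ∧ P s(v, w)}).ncard :=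
        (Set.ncard_image_of_injective _ hinj).symm
    _ = _ := by rw [himg]

lemma my_handshake {V : Type*} [Fintype V] [DecidableEq V] (E : Finset (Sym2 V))
    (hE : ∀ e ∈ E, ¬ e.IsDiag) :
    ∑ v : V, ((E.filter (v ∈ ·)).card) = 2 * E.card := by
  have h1 : ∀ v, ((E.filter (v ∈ ·)).card) = ∑ e ∈ E, (if v ∈ e then 1 else 0) := by
    intro v; rw [Finset.card_filter]
  simp only [h1]
  rw [Finset.sum_comm]
  rw [Finset.sum_congr rfl (fun e he => ?_), Finset.sum_const, smul_eq_mul, mul_comm]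
  have h2 : ∑ v : V, (if v ∈ e then 1 else 0) = (Finset.univ.filter (· ∈ e)).card := by
    rw [Finset.card_filter]
  rw [h2]
  induction e with
  | _ x y =>
    have hxy : x ≠ y := by
      intro h; exact hE _ he (by simp [h, Sym2.mk_isDiag_iff])
    have : Finset.univ.filter (· ∈ s(x, y)) = {x, y} := by
      ext z; simp [Sym2.mem_iff]
    rw [this, Finset.card_pair hxy]

lemma my_even_odds {V : Type*} [Fintype V] [DecidableEq V] (E : Finset (Sym2 V))
    (hE : ∀ e ∈ E, ¬ e.IsDiag) :
    Even ((Finset.univ.filter (fun v => Odd ((E.filter (v ∈ ·)).card))).card) := by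
  have h1 := my_count_odds_mod (Finset.univ : Finset V) (fun v => (E.filter (v ∈ ·)).card)
  rw [my_handshake E hE] at h1
  rw [Nat.even_iff]
  omega

section RowAux
open scoped Classical

lemma my_ncard_split {V : Type*} [Fintype V] (A P Q : V → Prop)
    (hdisj : ∀ w, A w → P w → Q w → False) :
    {w | A w ∧ (P w ∨ Q w)}.ncard = {w | A w ∧ P w}.ncard + {w | A w ∧ Q w}.ncard := by
  have h1 : {w | A w ∧ (P w ∨ Q w)} = {w | A w ∧ P w} ∪ {w | A w ∧ Q w} := by
    ext w; simp only [Set.mem_setOf_eq, Set.mem_union]; tauto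
  rw [h1, Set.ncard_union_eq ?_ (Set.toFinite _) (Set.toFinite _)]
  rw [Set.disjoint_left]
  rintro w ⟨hA, hP⟩ ⟨-, hQ⟩
  exact hdisj w hA hP hQ

variable {s : ℕ} (R : SimpleGraph (Fin 3 × Fin s)) (g : Sym2 (Fin 3 × Fin s) → Fin 3)

/-- number of neighbours of `v` in the same row joined by an edge of colour `c` -/
noncomputable def xdeg (c : Fin 3) (v : Fin 3 × Fin s) : ℕ :=
  {w | R.Adj v w ∧ w.1 = v.1 ∧ g s(v, w) = c}.ncard

lemma three (a : Fin 3) : a = 0 ∨ a = 1 ∨ a = 2 := by revert a; decide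

lemma fin3_forced {x a b c : Fin 3} (hab : a ≠ b) (hac : a ≠ c) (hbc : b ≠ c)
    (h1 : x ≠ a) (h2 : x ≠ b) : x = c := by revert x a b c; decide

lemma dColor_decomp (c b : Fin 3) (v) (hb : b ≠ v.1)
    (hset : ∀ w, R.Adj v w → (g s(v, w) = c ↔ (w.1 = b ∨ (w.1 = v.1 ∧ g s(v, w) = c)))) :
    dColor R g c v = nRow R b v + xdeg R g c v := by
  have h1 : {w | R.Adj v w ∧ g s(v, w) = c}
      = {w | R.Adj v w ∧ ((w.1 = b) ∨ (w.1 = v.1 ∧ g s(v, w) = c))} := by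
    ext w; exact and_congr_right fun hadj => hset w hadj
  rw [dColor, h1, my_ncard_split _ _ _ (fun w _ h1 h2 => hb (h1.symm.trans h2.1))]
  rfl

lemma dColor_zero (c : Fin 3) (v) (hset : ∀ w, R.Adj v w → g s(v, w) ≠ c) :
    dColor R g c v = 0 := by
  have h1 : {w | R.Adj v w ∧ g s(v, w) = c} = ∅ := by
    ext w
    simp only [Set.mem_setOf_eq, Set.mem_empty_iff_false, iff_false, not_and]
    exact hset w
  simp [dColor, h1]

lemma xdeg_split (b c : Fin 3) (hbc : b ≠ c) (v)
    (hg : ∀ w, R.Adj v w → w.1 = v.1 → (g s(v, w) = b ∨ g s(v, w) = c)) :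
    xdeg R g b v + xdeg R g c v = nRow R v.1 v := by
  have h1 : {w | R.Adj v w ∧ w.1 = v.1}
      = {w | (R.Adj v w ∧ w.1 = v.1) ∧ (g s(v, w) = b ∨ g s(v, w) = c)} := by
    ext w
    simp only [Set.mem_setOf_eq]
    exact ⟨fun h => ⟨h, hg w h.1 h.2⟩, fun h => h.1⟩
  rw [nRow, h1, my_ncard_split _ _ _ (fun w _ hb' hc' => hbc (hb'.symm.trans hc'))]
  congr 1 <;> · rw [xdeg]; congr 1; ext w; simp only [Set.mem_setOf_eq]; tauto

lemma dRows_split (a b : Fin 3) (hab : a ≠ b) (v) :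
    dRows R a b v = nRow R a v + nRow R b v := by
  rw [dRows, my_ncard_split _ _ _ (fun w _ h1 h2 => hab (h1.symm.trans h2))]
  rfl

lemma deg_split (v) :
    (R.neighborSet v).ncard = nRow R 0 v + nRow R 1 v + nRow R 2 v := by
  have h1 : R.neighborSet v = {w | R.Adj v w ∧ (w.1 = 0 ∨ (w.1 = 1 ∨ w.1 = 2))} := by
    ext w
    simp only [SimpleGraph.mem_neighborSet, Set.mem_setOf_eq]
    exact ⟨fun h => ⟨h, three w.1⟩, fun h => h.1⟩
  rw [h1, my_ncard_split _ _ _ (fun w _ h1 h2 => by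
    rcases h2 with h2 | h2 <;> exact absurd (h1.symm.trans h2) (by decide))]
  have h2 := my_ncard_split (fun w => R.Adj v w) (fun w => w.1 = 1) (fun w => w.1 = 2)
    (fun w _ h1 h2 => absurd (h1.symm.trans h2) (by decide))
  rw [h2]
  rw [nRow, nRow, nRow]
  ring

end RowAux
section Fwd
open scoped Classical

variable {V : Type*}


lemma fin3_cases (x : Fin 3) {a b c : Fin 3} (hab : a ≠ b) (hac : a ≠ c) (hbc : b ≠ c) :
    x = a ∨ x = b ∨ x = c := by revert x a b c; decide

variable {s : ℕ} (R : SimpleGraph (Fin 3 × Fin s)) (g : Sym2 (Fin 3 × Fin s) → Fin 3)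

lemma hforce_of (hcr : ∀ v w, R.Adj v w → g s(v, w) ≠ v.1 ∧ g s(v, w) ≠ w.1)
    {a b c : Fin 3} (hab : a ≠ b) (hac : a ≠ c) (hbc : b ≠ c)
    {v w : Fin 3 × Fin s} (h : R.Adj v w) (hva : v.1 = a) (hwb : w.1 = b) :
    g s(v, w) = c := by
  have h1 := (hcr v w h).1
  have h2 := (hcr v w h).2
  rw [hva] at h1; rw [hwb] at h2
  exact fin3_forced hab hac hbc h1 h2

lemma amiable_hset (hcr : ∀ v w, R.Adj v w → g s(v, w) ≠ v.1 ∧ g s(v, w) ≠ w.1)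
    {a b c : Fin 3} (hab : a ≠ b) (hac : a ≠ c) (hbc : b ≠ c)
    (v : Fin 3 × Fin s) (hva : v.1 = a) :
    ∀ w, R.Adj v w → (g s(v, w) = c ↔ (w.1 = b ∨ (w.1 = v.1 ∧ g s(v, w) = c))) := by
  intro w hadj
  rcases fin3_cases w.1 hab hac hbc with h | h | h
  · constructor
    · intro hg; exact Or.inr ⟨h.trans hva.symm, hg⟩
    · rintro (hb | ⟨-, hg⟩)
      · exact absurd (h.symm.trans hb) hab
      · exact hg
  · have hg := hforce_of R g hcr hab hac hbc hadj hva h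
    exact ⟨fun _ => Or.inl h, fun _ => hg⟩
  · have hg : g s(v, w) = b := hforce_of R g hcr hac hab hbc.symm hadj hva h
    constructor
    · intro h'; exact absurd (hg.symm.trans h') hbc
    · rintro (h' | ⟨h1, -⟩)
      · exact absurd (h.symm.trans h') hbc.symm
      · exact absurd (h.symm.trans (h1.trans hva)) (fun hh => hac hh.symm)

lemma amiable_hzero (hcr : ∀ v w, R.Adj v w → g s(v, w) ≠ v.1 ∧ g s(v, w) ≠ w.1)
    {a b c : Fin 3} (hab : a ≠ b) (hac : a ≠ c) (hbc : b ≠ c)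
    (v : Fin 3 × Fin s) (hvc : v.1 = c) :
    ∀ w, R.Adj v w → g s(v, w) ≠ c := by
  intro w hadj
  rcases fin3_cases w.1 hab hac hbc with h | h | h
  · have hg : g s(v, w) = b := hforce_of R g hcr (fun hh => hac hh.symm)
      (fun hh => hbc hh.symm) hab hadj hvc h
    rw [hg]; exact hbc
  · have hg : g s(v, w) = a := hforce_of R g hcr (fun hh => hbc hh.symm)
      (fun hh => hac hh.symm) hab.symm hadj hvc h
    rw [hg]; exact hac
  · intro hg
    exact (hcr v w hadj).1 (hg.trans hvc.symm)

lemma amiable_hpair (hcr : ∀ v w, R.Adj v w → g s(v, w) ≠ v.1 ∧ g s(v, w) ≠ w.1)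
    {a b c : Fin 3} (hab : a ≠ b) (hac : a ≠ c) (hbc : b ≠ c)
    (v : Fin 3 × Fin s) (hva : v.1 = a) :
    ∀ w, R.Adj v w → w.1 = v.1 → (g s(v, w) = b ∨ g s(v, w) = c) := by
  intro w hadj _
  have h1 := (hcr v w hadj).1
  rw [hva] at h1
  rcases fin3_cases (g s(v, w)) hab hac hbc with h | h | h
  · exact absurd h h1
  · exact Or.inl h
  · exact Or.inr h
end Fwd

section FwdMain
open scoped Classical

lemma forward_dir {s : ℕ} (R : SimpleGraph (Fin 3 × Fin s))
    (g : Sym2 (Fin 3 × Fin s) → Fin 3)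
    (ham : Amiable R (fun v => v.1) g) :
    ∃ φ : Fin 3 × Fin s → Bool, ParityColoring R φ := by
  classical
  have hcr : ∀ v w, R.Adj v w → g s(v, w) ≠ v.1 ∧ g s(v, w) ≠ w.1 := by
    intro v w h
    constructor
    · exact fun he => ham.2.1 v w h he.symm
    · intro he
      apply ham.2.1 w v h.symm
      rw [Sym2.eq_swap]
      exact he.symm
  set φ : Fin 3 × Fin s → Bool := fun v =>
    if v.1 = 1 then decide (Odd (xdeg R g 2 v)) else decide (Odd (xdeg R g 1 v)) with hφdef
  have hφ0 : ∀ j, φ ((0 : Fin 3), j) = decide (Odd (xdeg R g 1 ((0 : Fin 3), j))) := by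
    intro j; simp only [hφdef]; exact if_neg (by decide)
  have hφ1 : ∀ j, φ ((1 : Fin 3), j) = decide (Odd (xdeg R g 2 ((1 : Fin 3), j))) := by
    intro j; simp only [hφdef]; exact if_pos (by decide)
  have hφ2 : ∀ j, φ ((2 : Fin 3), j) = decide (Odd (xdeg R g 1 ((2 : Fin 3), j))) := by
    intro j; simp only [hφdef]; exact if_neg (by decide)
  refine ⟨φ, ?_, ?_, ?_⟩
  · -- condition (i)
    intro j
    have h20 : dColor R g 2 (0, j) = nRow R 1 (0, j) + xdeg R g 2 (0, j) :=
      dColor_decomp R g 2 1 (0, j) (by simp)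
        (amiable_hset R g hcr (a := 0) (b := 1) (by decide) (by decide) (by decide) (0, j) rfl)
    have h21 : dColor R g 2 (1, j) = nRow R 0 (1, j) + xdeg R g 2 (1, j) :=
      dColor_decomp R g 2 0 (1, j) (by simp)
        (amiable_hset R g hcr (a := 1) (b := 0) (by decide) (by decide) (by decide) (1, j) rfl)
    have h22 : dColor R g 2 (2, j) = 0 :=
      dColor_zero R g 2 (2, j)
        (amiable_hzero R g hcr (a := 0) (b := 1) (by decide) (by decide) (by decide) (2, j) rfl)
    have hx0 : xdeg R g 1 (0, j) + xdeg R g 2 (0, j) = nRow R 0 (0, j) :=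
      xdeg_split R g 1 2 (by decide) (0, j)
        (amiable_hpair R g hcr (a := 0) (b := 1) (by decide) (by decide) (by decide) (0, j) rfl)
    have hdr : dRows R 0 1 (0, j) = nRow R 0 (0, j) + nRow R 1 (0, j) :=
      dRows_split R 0 1 (by decide) (0, j)
    have he2 := ham.2.2 2 j
    rw [hφ0 j, hφ1 j, decide_eq_decide, Nat.odd_iff, Nat.odd_iff, Nat.even_iff]
    rw [Nat.even_iff] at he2
    omega
  · -- condition (ii)
    intro j
    have h00 : dColor R g 0 (0, j) = 0 :=
      dColor_zero R g 0 (0, j)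
        (amiable_hzero R g hcr (a := 1) (b := 2) (by decide) (by decide) (by decide) (0, j) rfl)
    have h01 : dColor R g 0 (1, j) = nRow R 2 (1, j) + xdeg R g 0 (1, j) :=
      dColor_decomp R g 0 2 (1, j) (by simp)
        (amiable_hset R g hcr (a := 1) (b := 2) (by decide) (by decide) (by decide) (1, j) rfl)
    have h02 : dColor R g 0 (2, j) = nRow R 1 (2, j) + xdeg R g 0 (2, j) :=
      dColor_decomp R g 0 1 (2, j) (by simp)
        (amiable_hset R g hcr (a := 2) (b := 1) (by decide) (by decide) (by decide) (2, j) rfl)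
    have hx1 : xdeg R g 2 (1, j) + xdeg R g 0 (1, j) = nRow R 1 (1, j) :=
      xdeg_split R g 2 0 (by decide) (1, j)
        (amiable_hpair R g hcr (a := 1) (b := 2) (by decide) (by decide) (by decide) (1, j) rfl)
    have hx2 : xdeg R g 1 (2, j) + xdeg R g 0 (2, j) = nRow R 2 (2, j) :=
      xdeg_split R g 1 0 (by decide) (2, j)
        (amiable_hpair R g hcr (a := 2) (b := 1) (by decide) (by decide) (by decide) (2, j) rfl)
    have hdr1 : dRows R 1 2 (1, j) = nRow R 1 (1, j) + nRow R 2 (1, j) :=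
      dRows_split R 1 2 (by decide) (1, j)
    have hdr2 : dRows R 1 2 (2, j) = nRow R 1 (2, j) + nRow R 2 (2, j) :=
      dRows_split R 1 2 (by decide) (2, j)
    have he0 := ham.2.2 0 j
    rw [hφ1 j, hφ2 j, decide_eq_decide, Nat.odd_iff, Nat.odd_iff, Nat.even_iff]
    rw [Nat.even_iff] at he0
    omega
  · -- condition (iii)
    intro i K
    set c : Fin 3 := if i = 1 then 2 else 1 with hc
    have hφv : ∀ v : Fin 3 × Fin s, v.1 = i → φ v = decide (Odd (xdeg R g c v)) := by
      intro v hv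
      simp only [hφdef, hv, hc]
      by_cases h : i = 1 <;> simp [h]
    set Pred : Sym2 (Fin 3 × Fin s) → Prop := fun e =>
      e ∈ R.edgeSet ∧ (∀ x ∈ e, ∃ u : rowSet s i, u ∈ K.supp ∧ u.val = x) ∧ g e = c
      with hPred
    set E : Finset (Sym2 (Fin 3 × Fin s)) := Finset.univ.filter Pred with hE
    have hdiag : ∀ e ∈ E, ¬ e.IsDiag := by
      intro e he
      exact R.not_isDiag_of_mem_edgeSet ((Finset.mem_filter.mp he).2).1
    have hkey : ∀ u : rowSet s i, u ∈ K.supp →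
        xdeg R g c u.val = ((E.filter (u.val ∈ ·)).card) := by
      intro u hu
      have hrow : u.val.1 = i := u.2
      have h1 := my_deg_edge R Pred (fun e he => he.1) u.val
      have h2 : {e : Sym2 (Fin 3 × Fin s) | Pred e ∧ u.val ∈ e}
          = ↑(E.filter (u.val ∈ ·)) := by
        ext e
        simp only [Set.mem_setOf_eq, Finset.coe_filter, Finset.mem_filter, Finset.mem_univ,
          hE, true_and]
      rw [h2, Set.ncard_coe_finset] at h1
      rw [xdeg, ← h1]
      congr 1
      ext w
      simp only [Set.mem_setOf_eq]
      constructor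
      · rintro ⟨hadj, hw1, hgc⟩
        refine ⟨hadj, R.mem_edgeSet.mpr hadj, ?_, hgc⟩
        intro x hx
        rcases Sym2.mem_iff.mp hx with rfl | rfl
        · exact ⟨u, hu, rfl⟩
        · have hwrow : x ∈ rowSet s i := hw1.trans hrow
          refine ⟨⟨x, hwrow⟩, ?_, rfl⟩
          have hadj' : (R.induce (rowSet s i)).Adj u ⟨x, hwrow⟩ := hadj
          rw [SimpleGraph.ConnectedComponent.mem_supp_iff]
          rw [← SimpleGraph.ConnectedComponent.connectedComponentMk_eq_of_adj hadj']
          exact SimpleGraph.ConnectedComponent.mem_supp_iff _ _ |>.mp hu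
      · rintro ⟨hadj, -, hmem, hgc⟩
        refine ⟨hadj, ?_, hgc⟩
        obtain ⟨u', -, hval⟩ := hmem w (Sym2.mem_mk_right _ _)
        rw [← hval]
        exact (u'.2 : u'.val.1 = i).trans hrow.symm
    have hrev : ∀ v : Fin 3 × Fin s, Odd ((E.filter (v ∈ ·)).card) →
        ∃ u : rowSet s i, u ∈ K.supp ∧ u.val = v := by
      intro v hv
      have hpos : 0 < (E.filter (v ∈ ·)).card := hv.pos
      obtain ⟨e, he⟩ := Finset.card_pos.mp hpos
      have he' := Finset.mem_filter.mp he
      have hPe := (Finset.mem_filter.mp he'.1).2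
      exact hPe.2.1 v he'.2
    have himg : Subtype.val '' {u : rowSet s i | u ∈ K.supp ∧ φ u.val = true}
        = {v : Fin 3 × Fin s | Odd ((E.filter (v ∈ ·)).card)} := by
      ext v
      simp only [Set.mem_image, Set.mem_setOf_eq]
      constructor
      · rintro ⟨u, ⟨hu, hφu⟩, rfl⟩
        rw [hφv u.val u.2, decide_eq_true_eq] at hφu
        rw [← hkey u hu]
        exact hφu
      · intro hodd
        obtain ⟨u, hu, rfl⟩ := hrev _ hodd
        refine ⟨u, ⟨hu, ?_⟩, rfl⟩
        rw [hφv u.val u.2, decide_eq_true_eq, hkey u hu]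
        exact hodd
    have hn1 : {u : rowSet s i | u ∈ K.supp ∧ φ u.val = true}.ncard
        = {v : Fin 3 × Fin s | Odd ((E.filter (v ∈ ·)).card)}.ncard := by
      rw [← himg, Set.ncard_image_of_injective _ Subtype.val_injective]
    rw [hn1]
    have hn2 : {v : Fin 3 × Fin s | Odd ((E.filter (v ∈ ·)).card)}
        = ↑(Finset.univ.filter (fun v => Odd ((E.filter (v ∈ ·)).card))) := by
      ext v; simp
    rw [hn2, Set.ncard_coe_finset]
    exact my_even_odds E hdiag

end FwdMain

section BwdMain
open scoped Classical

lemma rowA_exists {s : ℕ} (R : SimpleGraph (Fin 3 × Fin s)) (φ : Fin 3 × Fin s → Bool)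
    (hcomp : ∀ i : Fin 3, ∀ K : (R.induce (rowSet s i)).ConnectedComponent,
      Even ({u : rowSet s i | u ∈ K.supp ∧ φ u.val = true}.ncard)) (i : Fin 3) :
    ∃ A : Finset (Sym2 (Fin 3 × Fin s)),
      (∀ e ∈ A, ∃ x y : Fin 3 × Fin s, R.Adj x y ∧ x.1 = i ∧ y.1 = i ∧ e = s(x, y)) ∧
      (∀ v : Fin 3 × Fin s, v.1 = i →
        (φ v = true ↔ Odd ((A.filter (v ∈ ·)).card))) := by
  classical
  set G := R.induce (rowSet s i) with hG
  set T : Finset ↥(rowSet s i) := Finset.univ.filter (fun u => φ u.val = true) with hT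
  have hyp : ∀ K : G.ConnectedComponent, Even ((T.filter (· ∈ K.supp)).card) := by
    intro K
    have h := hcomp i K
    have heq : {u : rowSet s i | u ∈ K.supp ∧ φ u.val = true} = ↑(T.filter (· ∈ K.supp)) := by
      ext u
      simp only [Set.mem_setOf_eq, Finset.coe_filter, Finset.mem_filter, Finset.mem_univ,
        hT, true_and]
      tauto
    rwa [heq, Set.ncard_coe_finset] at h
  obtain ⟨S, hSsub, hSdeg⟩ := my_tjoin G T hyp
  refine ⟨S.image (Sym2.map Subtype.val), ?_, ?_⟩
  · intro e he
    obtain ⟨e', he', rfl⟩ := Finset.mem_image.mp he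
    have hedge : e' ∈ G.edgeSet := hSsub he'
    induction e' with
    | _ x y =>
      rw [SimpleGraph.mem_edgeSet] at hedge
      exact ⟨x.val, y.val, hedge, x.2, y.2, by rw [Sym2.map_pair_eq]⟩
  · intro v hv
    have hv' : v ∈ rowSet s i := hv
    have hcard : ((S.image (Sym2.map Subtype.val)).filter (v ∈ ·)).card
        = ((S.filter ((⟨v, hv'⟩ : rowSet s i) ∈ ·)).card) := by
      rw [Finset.filter_image]
      rw [Finset.card_image_of_injective _ (Sym2.map.injective Subtype.val_injective)]
      congr 1
      apply Finset.filter_congr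
      intro e _
      simp only [Sym2.mem_map, decide_eq_true_eq]
      constructor
      · rintro ⟨a, ha, hav⟩
        rwa [show (⟨v, hv'⟩ : rowSet s i) = a from Subtype.ext hav.symm]
      · intro h
        exact ⟨⟨v, hv'⟩, h, rfl⟩
    rw [hcard]
    have := hSdeg ⟨v, hv'⟩
    rw [← this]
    simp [hT]

end BwdMain

section BwdMain2
open scoped Classical

lemma backward_dir {s : ℕ} (R : SimpleGraph (Fin 3 × Fin s)) (heul : EulerianRC R)
    (φ : Fin 3 × Fin s → Bool) (hφ : ParityColoring R φ) :
    ∃ g : Sym2 (Fin 3 × Fin s) → Fin 3, Amiable R (fun v => v.1) g := by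
  classical
  obtain ⟨A0, hA0mem, hA0deg⟩ := rowA_exists R φ hφ.2.2 0
  obtain ⟨A1, hA1mem, hA1deg⟩ := rowA_exists R φ hφ.2.2 1
  obtain ⟨A2, hA2mem, hA2deg⟩ := rowA_exists R φ hφ.2.2 2
  have hArow : ∀ (A : Finset (Sym2 (Fin 3 × Fin s))) (i : Fin 3),
      (∀ e ∈ A, ∃ x y : Fin 3 × Fin s, R.Adj x y ∧ x.1 = i ∧ y.1 = i ∧ e = s(x, y)) →
      ∀ e ∈ A, (∀ x ∈ e, x.1 = i) ∧ e ∈ R.edgeSet := by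
    intro A i hA e he
    obtain ⟨x, y, hadj, hx, hy, rfl⟩ := hA e he
    refine ⟨?_, R.mem_edgeSet.mpr hadj⟩
    intro z hz
    rcases Sym2.mem_iff.mp hz with rfl | rfl
    · exact hx
    · exact hy
  have hA0' := hArow A0 0 hA0mem
  have hA1' := hArow A1 1 hA1mem
  have hA2' := hArow A2 2 hA2mem
  set g : Sym2 (Fin 3 × Fin s) → Fin 3 := fun e =>
    if e ∈ A0 then 1 else if e ∈ A1 then 2 else if e ∈ A2 then 1
    else if (∀ x ∈ e, x.1 = 0) then 2
    else if (∀ x ∈ e, x.1 = 1) then 0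
    else if (∀ x ∈ e, x.1 = 2) then 0
    else if ((∃ x ∈ e, x.1 = 0) ∧ (∃ x ∈ e, x.1 = 1)) then 2
    else if ((∃ x ∈ e, x.1 = 0) ∧ (∃ x ∈ e, x.1 = 2)) then 1
    else 0 with hgdef
  have hnotA : ∀ (A : Finset (Sym2 (Fin 3 × Fin s))) (i : Fin 3),
      (∀ e ∈ A, (∀ x ∈ e, x.1 = i) ∧ e ∈ R.edgeSet) →
      ∀ e : Sym2 (Fin 3 × Fin s), ∀ j : Fin 3, j ≠ i → (∃ x ∈ e, x.1 = j) → e ∉ A := by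
    rintro A i hA e j hji ⟨x, hx, hxj⟩ he
    exact hji ((hxj.symm.trans ((hA e he).1 x hx)))
  have hpig : ∀ (e : Sym2 (Fin 3 × Fin s)) (a b c : Fin 3), a ≠ b → a ≠ c → b ≠ c →
      (∃ x ∈ e, x.1 = a) → (∃ x ∈ e, x.1 = b) → ¬ (∃ x ∈ e, x.1 = c) := by
    rintro e a b c hab hac hbc ⟨y, hy, hya⟩ ⟨z, hz, hzb⟩ ⟨x, hx, hxc⟩
    induction e with
    | _ p q =>
      rcases Sym2.mem_iff.mp hx with rfl | rfl <;>
        rcases Sym2.mem_iff.mp hy with rfl | rfl <;>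
        rcases Sym2.mem_iff.mp hz with rfl | rfl <;>
        first
          | exact hac (hya.symm.trans hxc)
          | exact hbc (hzb.symm.trans hxc)
          | exact hab (hya.symm.trans hzb)
  have hg0 : ∀ e : Sym2 (Fin 3 × Fin s), (∀ x ∈ e, x.1 = 0) →
      ((e ∈ A0 → g e = 1) ∧ (e ∉ A0 → g e = 2)) := by
    intro e hrow
    have hx0 : ∃ x ∈ e, x.1 = 0 := by
      induction e with
      | _ x y => exact ⟨x, Sym2.mem_mk_left x y, hrow x (Sym2.mem_mk_left x y)⟩
    have hn1 : e ∉ A1 := hnotA A1 1 hA1' e 0 (by decide) hx0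
    have hn2 : e ∉ A2 := hnotA A2 2 hA2' e 0 (by decide) hx0
    constructor
    · intro h; simp only [hgdef]; rw [if_pos h]
    · intro h; simp only [hgdef]; rw [if_neg h, if_neg hn1, if_neg hn2, if_pos hrow]
  have hg1 : ∀ e : Sym2 (Fin 3 × Fin s), (∀ x ∈ e, x.1 = 1) →
      ((e ∈ A1 → g e = 2) ∧ (e ∉ A1 → g e = 0)) := by
    intro e hrow
    have hx1 : ∃ x ∈ e, x.1 = 1 := by
      induction e with
      | _ x y => exact ⟨x, Sym2.mem_mk_left x y, hrow x (Sym2.mem_mk_left x y)⟩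
    have hn0 : e ∉ A0 := hnotA A0 0 hA0' e 1 (by decide) hx1
    have hn2 : e ∉ A2 := hnotA A2 2 hA2' e 1 (by decide) hx1
    have hnr0 : ¬ (∀ x ∈ e, x.1 = 0) := by
      intro h
      obtain ⟨x, hx, hx1⟩ := hx1
      exact absurd ((h x hx).symm.trans hx1) (by decide)
    constructor
    · intro h; simp only [hgdef]; rw [if_neg hn0, if_pos h]
    · intro h; simp only [hgdef]; rw [if_neg hn0, if_neg h, if_neg hn2, if_neg hnr0, if_pos hrow]
  have hg2 : ∀ e : Sym2 (Fin 3 × Fin s), (∀ x ∈ e, x.1 = 2) →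
      ((e ∈ A2 → g e = 1) ∧ (e ∉ A2 → g e = 0)) := by
    intro e hrow
    have hx2 : ∃ x ∈ e, x.1 = 2 := by
      induction e with
      | _ x y => exact ⟨x, Sym2.mem_mk_left x y, hrow x (Sym2.mem_mk_left x y)⟩
    have hn0 : e ∉ A0 := hnotA A0 0 hA0' e 2 (by decide) hx2
    have hn1 : e ∉ A1 := hnotA A1 1 hA1' e 2 (by decide) hx2
    have hnr0 : ¬ (∀ x ∈ e, x.1 = 0) := by
      intro h
      obtain ⟨x, hx, hx2⟩ := hx2
      exact absurd ((h x hx).symm.trans hx2) (by decide)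
    have hnr1 : ¬ (∀ x ∈ e, x.1 = 1) := by
      intro h
      obtain ⟨x, hx, hx2⟩ := hx2
      exact absurd ((h x hx).symm.trans hx2) (by decide)
    constructor
    · intro h; simp only [hgdef]; rw [if_neg hn0, if_neg hn1, if_pos h]
    · intro h
      simp only [hgdef]
      rw [if_neg hn0, if_neg hn1, if_neg h, if_neg hnr0, if_neg hnr1, if_pos hrow]
  have hcross_eval : ∀ e : Sym2 (Fin 3 × Fin s), ∀ a b : Fin 3, a ≠ b →
      (∃ x ∈ e, x.1 = a) → (∃ x ∈ e, x.1 = b) →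
      (∀ i : Fin 3, ¬ (∀ x ∈ e, x.1 = i)) ∧ e ∉ A0 ∧ e ∉ A1 ∧ e ∉ A2 := by
    rintro e a b hab ⟨x, hx, hxa⟩ ⟨y, hy, hyb⟩
    refine ⟨?_, ?_, ?_, ?_⟩
    · intro i h
      exact hab (((h x hx).symm.trans hxa).symm.trans ((h y hy).symm.trans hyb))
    · by_cases ha : a = 0
      · exact hnotA A0 0 hA0' e b (fun h => hab (ha.trans h.symm)) ⟨y, hy, hyb⟩
      · exact hnotA A0 0 hA0' e a ha ⟨x, hx, hxa⟩
    · by_cases ha : a = 1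
      · exact hnotA A1 1 hA1' e b (fun h => hab (ha.trans h.symm)) ⟨y, hy, hyb⟩
      · exact hnotA A1 1 hA1' e a ha ⟨x, hx, hxa⟩
    · by_cases ha : a = 2
      · exact hnotA A2 2 hA2' e b (fun h => hab (ha.trans h.symm)) ⟨y, hy, hyb⟩
      · exact hnotA A2 2 hA2' e a ha ⟨x, hx, hxa⟩
  have hg01 : ∀ e : Sym2 (Fin 3 × Fin s),
      (∃ x ∈ e, x.1 = 0) → (∃ x ∈ e, x.1 = 1) → g e = 2 := by
    intro e h0 h1
    obtain ⟨hnr, hn0, hn1, hn2⟩ := hcross_eval e 0 1 (by decide) h0 h1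
    simp only [hgdef]
    rw [if_neg hn0, if_neg hn1, if_neg hn2, if_neg (hnr 0), if_neg (hnr 1), if_neg (hnr 2),
      if_pos ⟨h0, h1⟩]
  have hg02 : ∀ e : Sym2 (Fin 3 × Fin s),
      (∃ x ∈ e, x.1 = 0) → (∃ x ∈ e, x.1 = 2) → g e = 1 := by
    intro e h0 h2
    obtain ⟨hnr, hn0, hn1, hn2⟩ := hcross_eval e 0 2 (by decide) h0 h2
    have hne1 : ¬ ((∃ x ∈ e, x.1 = 0) ∧ (∃ x ∈ e, x.1 = 1)) :=
      fun h => hpig e 0 2 1 (by decide) (by decide) (by decide) h0 h2 h.2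
    simp only [hgdef]
    rw [if_neg hn0, if_neg hn1, if_neg hn2, if_neg (hnr 0), if_neg (hnr 1), if_neg (hnr 2),
      if_neg hne1, if_pos ⟨h0, h2⟩]
  have hg12 : ∀ e : Sym2 (Fin 3 × Fin s),
      (∃ x ∈ e, x.1 = 1) → (∃ x ∈ e, x.1 = 2) → g e = 0 := by
    intro e h1 h2
    obtain ⟨hnr, hn0, hn1, hn2⟩ := hcross_eval e 1 2 (by decide) h1 h2
    have hno0 : ¬ (∃ x ∈ e, x.1 = 0) :=
      hpig e 1 2 0 (by decide) (by decide) (by decide) h1 h2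
    simp only [hgdef]
    rw [if_neg hn0, if_neg hn1, if_neg hn2, if_neg (hnr 0), if_neg (hnr 1), if_neg (hnr 2),
      if_neg (fun h => hno0 h.1), if_neg (fun h => hno0 h.1)]
  -- no edge has the colour of one of its endpoints
  have hcr : ∀ v w, R.Adj v w → g s(v, w) ≠ v.1 ∧ g s(v, w) ≠ w.1 := by
    intro v w hadj
    have hvm : v ∈ s(v, w) := Sym2.mem_mk_left v w
    have hwm : w ∈ s(v, w) := Sym2.mem_mk_right v w
    have hrowlem : ∀ i : Fin 3, v.1 = i → w.1 = i → ∀ x ∈ s(v, w), x.1 = i := by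
      intro i hv hw x hx
      rcases Sym2.mem_iff.mp hx with rfl | rfl
      · exact hv
      · exact hw
    rcases three v.1 with hv | hv | hv <;> rcases three w.1 with hw | hw | hw
    · by_cases hm : s(v, w) ∈ A0
      · rw [(hg0 _ (hrowlem 0 hv hw)).1 hm, hv, hw]; exact ⟨by decide, by decide⟩
      · rw [(hg0 _ (hrowlem 0 hv hw)).2 hm, hv, hw]; exact ⟨by decide, by decide⟩
    · rw [hg01 _ ⟨v, hvm, hv⟩ ⟨w, hwm, hw⟩, hv, hw]; exact ⟨by decide, by decide⟩
    · rw [hg02 _ ⟨v, hvm, hv⟩ ⟨w, hwm, hw⟩, hv, hw]; exact ⟨by decide, by decide⟩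
    · rw [hg01 _ ⟨w, hwm, hw⟩ ⟨v, hvm, hv⟩, hv, hw]; exact ⟨by decide, by decide⟩
    · by_cases hm : s(v, w) ∈ A1
      · rw [(hg1 _ (hrowlem 1 hv hw)).1 hm, hv, hw]; exact ⟨by decide, by decide⟩
      · rw [(hg1 _ (hrowlem 1 hv hw)).2 hm, hv, hw]; exact ⟨by decide, by decide⟩
    · rw [hg12 _ ⟨v, hvm, hv⟩ ⟨w, hwm, hw⟩, hv, hw]; exact ⟨by decide, by decide⟩
    · rw [hg02 _ ⟨w, hwm, hw⟩ ⟨v, hvm, hv⟩, hv, hw]; exact ⟨by decide, by decide⟩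
    · rw [hg12 _ ⟨w, hwm, hw⟩ ⟨v, hvm, hv⟩, hv, hw]; exact ⟨by decide, by decide⟩
    · by_cases hm : s(v, w) ∈ A2
      · rw [(hg2 _ (hrowlem 2 hv hw)).1 hm, hv, hw]; exact ⟨by decide, by decide⟩
      · rw [(hg2 _ (hrowlem 2 hv hw)).2 hm, hv, hw]; exact ⟨by decide, by decide⟩
  -- xdeg in terms of the Finsets
  have hxA : ∀ (A : Finset (Sym2 (Fin 3 × Fin s))) (i c : Fin 3),
      (∀ e ∈ A, (∀ x ∈ e, x.1 = i) ∧ e ∈ R.edgeSet) →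
      (∀ e : Sym2 (Fin 3 × Fin s), (∀ x ∈ e, x.1 = i) →
        ((e ∈ A → g e = c) ∧ (e ∉ A → g e ≠ c))) →
      ∀ v : Fin 3 × Fin s, v.1 = i → xdeg R g c v = ((A.filter (v ∈ ·)).card) := by
    intro A i c hA' hgA v hv
    have h1 := my_deg_edge R (· ∈ A) (fun e he => (hA' e he).2) v
    have h2 : {e : Sym2 (Fin 3 × Fin s) | e ∈ A ∧ v ∈ e} = ↑(A.filter (v ∈ ·)) := by
      ext e
      simp only [Set.mem_setOf_eq, Finset.coe_filter, Finset.mem_filter]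
    rw [h2, Set.ncard_coe_finset] at h1
    rw [xdeg, ← h1]
    congr 1
    ext w
    simp only [Set.mem_setOf_eq]
    constructor
    · rintro ⟨hadj, hw1, hgc⟩
      refine ⟨hadj, ?_⟩
      have hrow : ∀ x ∈ s(v, w), x.1 = i := by
        intro x hx
        rcases Sym2.mem_iff.mp hx with rfl | rfl
        · exact hv
        · exact hw1.trans hv
      by_contra hm
      exact (hgA _ hrow).2 hm hgc
    · rintro ⟨hadj, hm⟩
      have hrow := (hA' _ hm).1
      refine ⟨hadj, (hrow w (Sym2.mem_mk_right v w)).trans hv.symm, (hgA _ hrow).1 hm⟩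
  have hx0 : ∀ v : Fin 3 × Fin s, v.1 = 0 → xdeg R g 1 v = ((A0.filter (v ∈ ·)).card) :=
    hxA A0 0 1 hA0' (fun e he => ⟨(hg0 e he).1,
      fun hm hc => by rw [(hg0 e he).2 hm] at hc; exact absurd hc (by decide)⟩)
  have hx1 : ∀ v : Fin 3 × Fin s, v.1 = 1 → xdeg R g 2 v = ((A1.filter (v ∈ ·)).card) :=
    hxA A1 1 2 hA1' (fun e he => ⟨(hg1 e he).1,
      fun hm hc => by rw [(hg1 e he).2 hm] at hc; exact absurd hc (by decide)⟩)
  have hx2 : ∀ v : Fin 3 × Fin s, v.1 = 2 → xdeg R g 1 v = ((A2.filter (v ∈ ·)).card) :=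
    hxA A2 2 1 hA2' (fun e he => ⟨(hg2 e he).1,
      fun hm hc => by rw [(hg2 e he).2 hm] at hc; exact absurd hc (by decide)⟩)
  have p0 : ∀ j, (φ ((0 : Fin 3), j) = true ↔ Odd (xdeg R g 1 (0, j))) := by
    intro j; rw [hx0 (0, j) rfl]; exact hA0deg (0, j) rfl
  have p1 : ∀ j, (φ ((1 : Fin 3), j) = true ↔ Odd (xdeg R g 2 (1, j))) := by
    intro j; rw [hx1 (1, j) rfl]; exact hA1deg (1, j) rfl
  have p2 : ∀ j, (φ ((2 : Fin 3), j) = true ↔ Odd (xdeg R g 1 (2, j))) := by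
    intro j; rw [hx2 (2, j) rfl]; exact hA2deg (2, j) rfl
  refine ⟨g, ?_, ?_, ?_⟩
  · intro j a b h
    exact h
  · intro v w hadj
    exact fun he => (hcr v w hadj).1 he.symm
  · intro c j
    have heu := heul j
    rw [deg_split R (0, j), deg_split R (1, j), deg_split R (2, j)] at heu
    have hc1 : (Odd (xdeg R g 1 (0, j)) ↔ Odd (xdeg R g 2 (1, j)))
        ↔ Even (dRows R 0 1 (0, j) + nRow R 0 (1, j)) := by
      have h := hφ.1 j
      rwa [Bool.eq_iff_iff, p0 j, p1 j] at h
    have hc2 : (Odd (xdeg R g 2 (1, j)) ↔ Odd (xdeg R g 1 (2, j)))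
        ↔ Even (dRows R 1 2 (1, j) + dRows R 1 2 (2, j)) := by
      have h := hφ.2.1 j
      rwa [Bool.eq_iff_iff, p1 j, p2 j] at h
    have hdr : dRows R 0 1 (0, j) = nRow R 0 (0, j) + nRow R 1 (0, j) :=
      dRows_split R 0 1 (by decide) (0, j)
    have hdr1 : dRows R 1 2 (1, j) = nRow R 1 (1, j) + nRow R 2 (1, j) :=
      dRows_split R 1 2 (by decide) (1, j)
    have hdr2 : dRows R 1 2 (2, j) = nRow R 1 (2, j) + nRow R 2 (2, j) :=
      dRows_split R 1 2 (by decide) (2, j)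
    have hp0 : xdeg R g 1 (0, j) + xdeg R g 2 (0, j) = nRow R 0 (0, j) :=
      xdeg_split R g 1 2 (by decide) (0, j)
        (amiable_hpair R g hcr (a := 0) (b := 1) (by decide) (by decide) (by decide) (0, j) rfl)
    have hp1 : xdeg R g 2 (1, j) + xdeg R g 0 (1, j) = nRow R 1 (1, j) :=
      xdeg_split R g 2 0 (by decide) (1, j)
        (amiable_hpair R g hcr (a := 1) (b := 2) (by decide) (by decide) (by decide) (1, j) rfl)
    have hp2 : xdeg R g 1 (2, j) + xdeg R g 0 (2, j) = nRow R 2 (2, j) :=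
      xdeg_split R g 1 0 (by decide) (2, j)
        (amiable_hpair R g hcr (a := 2) (b := 1) (by decide) (by decide) (by decide) (2, j) rfl)
    rw [Nat.odd_iff, Nat.odd_iff, Nat.even_iff] at hc1 hc2
    rw [Nat.even_iff] at heu
    rcases three c with rfl | rfl | rfl
    · have h00 : dColor R g 0 (0, j) = 0 :=
        dColor_zero R g 0 (0, j)
          (amiable_hzero R g hcr (a := 1) (b := 2) (by decide) (by decide) (by decide) (0, j) rfl)
      have h01 : dColor R g 0 (1, j) = nRow R 2 (1, j) + xdeg R g 0 (1, j) :=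
        dColor_decomp R g 0 2 (1, j) (by simp)
          (amiable_hset R g hcr (a := 1) (b := 2) (by decide) (by decide) (by decide) (1, j) rfl)
      have h02 : dColor R g 0 (2, j) = nRow R 1 (2, j) + xdeg R g 0 (2, j) :=
        dColor_decomp R g 0 1 (2, j) (by simp)
          (amiable_hset R g hcr (a := 2) (b := 1) (by decide) (by decide) (by decide) (2, j) rfl)
      rw [Nat.even_iff]
      omega
    · have h10 : dColor R g 1 (0, j) = nRow R 2 (0, j) + xdeg R g 1 (0, j) :=
        dColor_decomp R g 1 2 (0, j) (by simp)
          (amiable_hset R g hcr (a := 0) (b := 2) (by decide) (by decide) (by decide) (0, j) rfl)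
      have h11 : dColor R g 1 (1, j) = 0 :=
        dColor_zero R g 1 (1, j)
          (amiable_hzero R g hcr (a := 0) (b := 2) (by decide) (by decide) (by decide) (1, j) rfl)
      have h12 : dColor R g 1 (2, j) = nRow R 0 (2, j) + xdeg R g 1 (2, j) :=
        dColor_decomp R g 1 0 (2, j) (by simp)
          (amiable_hset R g hcr (a := 2) (b := 0) (by decide) (by decide) (by decide) (2, j) rfl)
      rw [Nat.even_iff]
      omega
    · have h20 : dColor R g 2 (0, j) = nRow R 1 (0, j) + xdeg R g 2 (0, j) :=
        dColor_decomp R g 2 1 (0, j) (by simp)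
          (amiable_hset R g hcr (a := 0) (b := 1) (by decide) (by decide) (by decide) (0, j) rfl)
      have h21 : dColor R g 2 (1, j) = nRow R 0 (1, j) + xdeg R g 2 (1, j) :=
        dColor_decomp R g 2 0 (1, j) (by simp)
          (amiable_hset R g hcr (a := 1) (b := 0) (by decide) (by decide) (by decide) (1, j) rfl)
      have h22 : dColor R g 2 (2, j) = 0 :=
        dColor_zero R g 2 (2, j)
          (amiable_hzero R g hcr (a := 0) (b := 1) (by decide) (by decide) (by decide) (2, j) rfl)
      rw [Nat.even_iff]
      omega

end BwdMain2

/-- With `R_C` eulerian, the row coloring `f (i, j) = i` extends to an amiable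
coloring of `R` if and only if `R` has a parity-coloring. -/
theorem stmt13 {s : ℕ} (R : SimpleGraph (Fin 3 × Fin s))
    (hcol : ColIndep R) (heul : EulerianRC R) :
    (∃ g : Sym2 (Fin 3 × Fin s) → Fin 3, Amiable R (fun v => v.1) g) ↔
      ∃ φ : Fin 3 × Fin s → Bool, ParityColoring R φ := by
  constructor
  · rintro ⟨g, hg⟩
    exact forward_dir R g hg
  · rintro ⟨φ, hφ⟩
    exact backward_dir R heul φ hφ
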